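/- Define P(X, Z) = √(X² + 4Z²) and let {(X_k, Z_k)} ⊂ ℝ² satisfy X₀ > 0, Z₀ > 0 and the recurrence X_{k+1} = (X_k + P(X_k, Z_k))² / (4 P(X_k, Z_k)) and Z_{k+1} = (Z_k/5)(4 + X_k / P(X_k, Z_k)) for all k. Assume X_k converges to some X_∞ ∈ ℝ and Z_k → 0 as k → ∞. Then X_∞ > 0, lim_{k→∞} 1/(k Z_k²) = 4/(5 X_∞²), and lim_{k→∞} k (X_∞ − X_k) = 25 X_∞ / 16. In particular Z_k = Θ(k^{−1/2}) and X_∞ − X_k = Θ(k^{−1}), i.e., each quantity is bounded above and below by positive constant multiples of the stated power of k for all large k. -/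

import Mathlib

open Filter Topology

noncomputable def PXZ (X Z : ℝ) : ℝ := Real.sqrt (X ^ 2 + 4 * Z ^ 2)

lemma sum_telescope_Ico' (f : ℕ → ℝ) {k n : ℕ} (h : k ≤ n) :
    ∑ j ∈ Finset.Ico k n, (f j - f (j + 1)) = f k - f n := by
  induction n, h using Nat.le_induction with
  | base => simp
  | succ n hn ih => rw [Finset.sum_Ico_succ_top hn, ih]; ring

lemma tail_lemma (a S : ℕ → ℝ) (c : ℝ)
    (ha : ∀ k, 0 ≤ a k)
    (hc : Tendsto (fun k : ℕ => (k : ℝ) ^ 2 * a k) atTop (𝓝 c))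
    (hS : ∀ k, Tendsto (fun n => ∑ j ∈ Finset.Ico k n, a j) atTop (𝓝 (S k))) :
    Tendsto (fun k : ℕ => (k : ℝ) * S k) atTop (𝓝 c) := by
  have hc0 : 0 ≤ c :=
    le_of_tendsto_of_tendsto' tendsto_const_nhds hc (fun k => mul_nonneg (by positivity) (ha k))
  rw [Metric.tendsto_atTop]
  intro ε hε
  obtain ⟨N₀, hN₀⟩ := Metric.tendsto_atTop.mp hc (ε / 2) (by linarith)
  set m : ℝ := max (c - ε / 2) 0 with hm
  have hm0 : 0 ≤ m := le_max_right _ _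
  have hmge : c - ε / 2 ≤ m := le_max_left _ _
  refine ⟨max (max N₀ 2) (⌈2 * (c + ε) / ε⌉₊ + 1), fun k hk => ?_⟩
  have hk0 : N₀ ≤ k := le_trans (le_trans (le_max_left _ _) (le_max_left _ _)) hk
  have hk2 : 2 ≤ k := le_trans (le_trans (le_max_right _ _) (le_max_left _ _)) hk
  have hkc : ⌈2 * (c + ε) / ε⌉₊ + 1 ≤ k := le_trans (le_max_right _ _) hk
  have hkR : (2 : ℝ) ≤ (k : ℝ) := by exact_mod_cast hk2
  have hkbig : 2 * (c + ε) / ε < (k : ℝ) := by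
    have h1 : 2 * (c + ε) / ε ≤ (⌈2 * (c + ε) / ε⌉₊ : ℝ) := Nat.le_ceil _
    have h2 : ((⌈2 * (c + ε) / ε⌉₊ + 1 : ℕ) : ℝ) ≤ (k : ℝ) := by exact_mod_cast hkc
    push_cast at h2; linarith
  -- per-term bounds
  have hterm : ∀ j, k ≤ j →
      m * (((j : ℝ))⁻¹ - (((j + 1 : ℕ) : ℝ))⁻¹) ≤ a j ∧
      a j ≤ (c + ε / 2) * ((((j : ℝ) - 1))⁻¹ - (((j + 1 : ℕ) : ℝ) - 1)⁻¹) := by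
    intro j hj
    have hj2 : (2 : ℝ) ≤ (j : ℝ) := le_trans hkR (by exact_mod_cast hj)
    have hjpos : (0 : ℝ) < (j : ℝ) := by linarith
    have hj1 : (0 : ℝ) < (j : ℝ) - 1 := by linarith
    have hd := hN₀ j (le_trans hk0 hj)
    rw [Real.dist_eq, abs_sub_lt_iff] at hd
    have hupper : (j : ℝ) ^ 2 * a j ≤ c + ε / 2 := by linarith [hd.1]
    have hlower : m ≤ (j : ℝ) ^ 2 * a j := by
      rcases max_cases (c - ε / 2) 0 with ⟨h1, h2⟩ | ⟨h1, h2⟩ <;> rw [hm, h1]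
      · linarith [hd.2]
      · exact mul_nonneg (by positivity) (ha j)
    constructor
    · have e1 : ((j : ℝ))⁻¹ - (((j + 1 : ℕ) : ℝ))⁻¹ = ((j : ℝ) * ((j : ℝ) + 1))⁻¹ := by
        push_cast; field_simp; ring
      rw [e1, ← div_eq_mul_inv, div_le_iff₀ (by positivity)]
      nlinarith [ha j, mul_nonneg (ha j) hjpos.le]
    · have e2 : (((j : ℝ) - 1))⁻¹ - (((j + 1 : ℕ) : ℝ) - 1)⁻¹ = (((j : ℝ) - 1) * (j : ℝ))⁻¹ := by
        push_cast; rw [add_sub_cancel_right, inv_sub_inv hj1.ne' hjpos.ne']; ring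
      rw [e2, ← div_eq_mul_inv, le_div_iff₀ (by positivity)]
      nlinarith [ha j, mul_nonneg (ha j) hjpos.le]
  have hkpos : (0 : ℝ) < (k : ℝ) := by linarith
  have hk1 : (0 : ℝ) < (k : ℝ) - 1 := by linarith
  -- upper bound on S k
  have hSub : S k ≤ (c + ε / 2) * ((k : ℝ) - 1)⁻¹ := by
    apply le_of_tendsto (hS k)
    filter_upwards [eventually_ge_atTop k] with n hn
    have hn2 : (2 : ℝ) ≤ (n : ℝ) := le_trans hkR (by exact_mod_cast hn)
    calc ∑ j ∈ Finset.Ico k n, a j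
        ≤ ∑ j ∈ Finset.Ico k n,
            (c + ε / 2) * ((((j : ℝ) - 1))⁻¹ - (((j + 1 : ℕ) : ℝ) - 1)⁻¹) := by
          apply Finset.sum_le_sum
          intro j hj
          exact (hterm j (Finset.mem_Ico.mp hj).1).2
      _ = (c + ε / 2) * (((k : ℝ) - 1)⁻¹ - ((n : ℝ) - 1)⁻¹) := by
          rw [← Finset.mul_sum, sum_telescope_Ico' (fun j => ((j : ℝ) - 1)⁻¹) hn]
      _ ≤ (c + ε / 2) * ((k : ℝ) - 1)⁻¹ := by
          have h1 : (0 : ℝ) ≤ ((n : ℝ) - 1)⁻¹ := inv_nonneg.mpr (by linarith)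
          nlinarith
  -- lower bound on S k
  have hSlb : m * (k : ℝ)⁻¹ ≤ S k := by
    have h1 : Tendsto (fun n : ℕ => m * ((k : ℝ)⁻¹ - ((n : ℝ))⁻¹)) atTop
        (𝓝 (m * ((k : ℝ)⁻¹ - 0))) :=
      tendsto_const_nhds.mul (tendsto_const_nhds.sub tendsto_inv_atTop_nhds_zero_nat)
    rw [sub_zero] at h1
    apply le_of_tendsto_of_tendsto h1 (hS k)
    filter_upwards [eventually_ge_atTop k] with n hn
    calc m * ((k : ℝ)⁻¹ - ((n : ℝ))⁻¹)
        = ∑ j ∈ Finset.Ico k n, m * (((j : ℝ))⁻¹ - (((j + 1 : ℕ) : ℝ))⁻¹) := by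
          rw [← Finset.mul_sum, sum_telescope_Ico' (fun j => ((j : ℝ))⁻¹) hn]
      _ ≤ ∑ j ∈ Finset.Ico k n, a j := by
          apply Finset.sum_le_sum
          intro j hj
          exact (hterm j (Finset.mem_Ico.mp hj).1).1
  -- conclude
  have hub : (k : ℝ) * S k < c + ε := by
    have h1 : (k : ℝ) * S k ≤ (k : ℝ) * ((c + ε / 2) * ((k : ℝ) - 1)⁻¹) :=
      mul_le_mul_of_nonneg_left hSub hkpos.le
    have h2 : (k : ℝ) * ((c + ε / 2) * ((k : ℝ) - 1)⁻¹) < c + ε := by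
      rw [show (k : ℝ) * ((c + ε / 2) * ((k : ℝ) - 1)⁻¹)
          = (c + ε / 2) * (k : ℝ) / ((k : ℝ) - 1) by ring, div_lt_iff₀ hk1]
      have hbig2 : 2 * (c + ε) < (k : ℝ) * ε := (div_lt_iff₀ hε).mp hkbig
      nlinarith
    linarith
  have hlb : c - ε < (k : ℝ) * S k := by
    have h1 : (k : ℝ) * (m * (k : ℝ)⁻¹) ≤ (k : ℝ) * S k :=
      mul_le_mul_of_nonneg_left hSlb hkpos.le
    have h2 : (k : ℝ) * (m * (k : ℝ)⁻¹) = m := by field_simp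
    rw [h2] at h1
    linarith
  rw [Real.dist_eq, abs_sub_lt_iff]
  constructor <;> linarith

lemma alg1 (x z p : ℝ) (hx : 0 < x) (hz : 0 < z) (hp : 0 < p) (hps : p^2 = x^2 + 4*z^2) :
    ((z/5*(4+x/p))^2)⁻¹ - (z^2)⁻¹ = 4*(9+x/p)/(p*(p+x)*(4+x/p)^2) := by
  have h1 : 0 < p + x := by linarith
  have h2 : 0 < 4 + x/p := by positivity
  have h2' : (4+x/p) ≠ 0 := ne_of_gt h2
  field_simp
  linear_combination (9*p+x) * hps

lemma alg2 (x z p : ℝ) (hx : 0 < x) (hp : 0 < p) (hps : p^2 = x^2 + 4*z^2) :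
    (x+p)^2/(4*p) - x = 4*(z^2)^2/(p*(p+x)^2) := by
  have h1 : 0 < p + x := by linarith
  field_simp
  linear_combination (p^2-x^2+4*z^2) * hps

/-- Example 2, case `Z₀ > 0`: for the recurrence
`X_{k+1} = (X_k + P(X_k,Z_k))²/(4P(X_k,Z_k))`, `Z_{k+1} = (Z_k/5)(4 + X_k/P(X_k,Z_k))`
with `X₀, Z₀ > 0`, `X_k → X_∞` and `Z_k → 0`, one has `X_∞ > 0`,
`lim 1/(k Z_k²) = 4/(5X_∞²)` and `lim k(X_∞ − X_k) = 25X_∞/16`; in particular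
`Z_k = Θ(k^{−1/2})` and `X_∞ − X_k = Θ(k^{−1})`. -/
theorem stmt19 (X Z : ℕ → ℝ) (hX0 : 0 < X 0) (hZ0 : 0 < Z 0)
    (hrecX : ∀ k : ℕ, X (k + 1) = (X k + PXZ (X k) (Z k)) ^ 2 / (4 * PXZ (X k) (Z k)))
    (hrecZ : ∀ k : ℕ, Z (k + 1) = (Z k / 5) * (4 + X k / PXZ (X k) (Z k)))
    (Xinf : ℝ) (hXlim : Tendsto X atTop (𝓝 Xinf))
    (hZlim : Tendsto Z atTop (𝓝 0)) :
    0 < Xinf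
    ∧ Tendsto (fun k : ℕ => 1 / ((k : ℝ) * Z k ^ 2)) atTop (𝓝 (4 / (5 * Xinf ^ 2)))
    ∧ Tendsto (fun k : ℕ => (k : ℝ) * (Xinf - X k)) atTop (𝓝 (25 * Xinf / 16))
    ∧ (∃ c₁ c₂ : ℝ, 0 < c₁ ∧ 0 < c₂ ∧ ∃ N : ℕ, ∀ k, N ≤ k →
        c₁ * (Real.sqrt k)⁻¹ ≤ Z k ∧ Z k ≤ c₂ * (Real.sqrt k)⁻¹)
    ∧ (∃ c₁ c₂ : ℝ, 0 < c₁ ∧ 0 < c₂ ∧ ∃ N : ℕ, ∀ k, N ≤ k →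
        c₁ * ((k : ℝ))⁻¹ ≤ Xinf - X k ∧ Xinf - X k ≤ c₂ * ((k : ℝ))⁻¹) := by
  -- positivity of the orbit
  have key : ∀ k, 0 < X k ∧ 0 < Z k := by
    intro k
    induction k with
    | zero => exact ⟨hX0, hZ0⟩
    | succ k ih =>
      obtain ⟨hx, hz⟩ := ih
      have hPpos : 0 < PXZ (X k) (Z k) := by
        rw [PXZ]; positivity
      constructor
      · rw [hrecX k]; positivity
      · rw [hrecZ k]; positivity
  have hXpos : ∀ k, 0 < X k := fun k => (key k).1
  have hZpos : ∀ k, 0 < Z k := fun k => (key k).2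
  have hPpos : ∀ k, 0 < PXZ (X k) (Z k) := by
    intro k; rw [PXZ]
    have := hXpos k
    positivity
  have hPsq : ∀ k, (PXZ (X k) (Z k)) ^ 2 = (X k) ^ 2 + 4 * (Z k) ^ 2 := by
    intro k; rw [PXZ]
    exact Real.sq_sqrt (by positivity)
  -- monotonicity of X
  have hmono : ∀ k, X k ≤ X (k + 1) := by
    intro k
    have hδ := alg2 (X k) (Z k) (PXZ (X k) (Z k)) (hXpos k) (hPpos k) (hPsq k)
    rw [hrecX k, ← sub_nonneg]
    have := hPpos k
    have hx := hXpos k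
    calc (0:ℝ) ≤ 4 * ((Z k ^ 2) ^ 2) / (PXZ (X k) (Z k) * (PXZ (X k) (Z k) + X k) ^ 2) := by
          positivity
      _ = (X k + PXZ (X k) (Z k)) ^ 2 / (4 * PXZ (X k) (Z k)) - X k := hδ.symm
  have hmono' : Monotone X := monotone_nat_of_le_succ hmono
  have hXle : ∀ k, X k ≤ Xinf := fun k => hmono'.ge_of_tendsto hXlim k
  have hXinf : 0 < Xinf := lt_of_lt_of_le hX0 (hXle 0)
  -- limit of P
  have hPlim : Tendsto (fun k => PXZ (X k) (Z k)) atTop (𝓝 Xinf) := by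
    have h1 : Tendsto (fun k => (X k) ^ 2 + 4 * (Z k) ^ 2) atTop
        (𝓝 (Xinf ^ 2 + 4 * 0 ^ 2)) :=
      (hXlim.pow 2).add ((hZlim.pow 2).const_mul 4)
    have h2 := (Real.continuous_sqrt.tendsto _).comp h1
    simp only [Function.comp_def] at h2
    have h3 : Real.sqrt (Xinf ^ 2 + 4 * 0 ^ 2) = Xinf := by
      rw [show Xinf ^ 2 + 4 * 0 ^ 2 = Xinf ^ 2 by ring, Real.sqrt_sq hXinf.le]
    rw [h3] at h2
    exact h2
  have hXPlim : Tendsto (fun k => X k / PXZ (X k) (Z k)) atTop (𝓝 1) := by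
    have := hXlim.div hPlim (ne_of_gt hXinf)
    rwa [div_self (ne_of_gt hXinf)] at this
  -- the increment of 1/Z²
  set L : ℝ := 4 / (5 * Xinf ^ 2) with hLdef
  have hdlim : Tendsto (fun k => ((Z (k + 1)) ^ 2)⁻¹ - ((Z k) ^ 2)⁻¹) atTop (𝓝 L) := by
    have hnum : Tendsto (fun k => 4 * (9 + X k / PXZ (X k) (Z k))) atTop (𝓝 (4 * (9 + 1))) :=
      (tendsto_const_nhds.add hXPlim).const_mul 4
    have hden : Tendsto (fun k => PXZ (X k) (Z k) * (PXZ (X k) (Z k) + X k)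
        * (4 + X k / PXZ (X k) (Z k)) ^ 2) atTop
        (𝓝 (Xinf * (Xinf + Xinf) * (4 + 1) ^ 2)) :=
      ((hPlim.mul (hPlim.add hXlim)).mul ((tendsto_const_nhds.add hXPlim).pow 2))
    have hq := hnum.div hden (by positivity)
    have hLeq : L = 4 * (9 + 1) / (Xinf * (Xinf + Xinf) * (4 + 1) ^ 2) := by
      rw [hLdef]
      field_simp
      ring
    rw [← hLeq] at hq
    apply hq.congr
    intro k
    simp only [Pi.div_apply]
    rw [← alg1 (X k) (Z k) (PXZ (X k) (Z k)) (hXpos k) (hZpos k) (hPpos k) (hPsq k), ← hrecZ k]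
  -- Cesàro
  have hw : Tendsto (fun n : ℕ => (n : ℝ)⁻¹ * ((Z n) ^ 2)⁻¹) atTop (𝓝 L) := by
    have hces := hdlim.cesaro
    have hsum : ∀ n : ℕ, ∑ i ∈ Finset.range n, (((Z (i + 1)) ^ 2)⁻¹ - ((Z i) ^ 2)⁻¹)
        = ((Z n) ^ 2)⁻¹ - ((Z 0) ^ 2)⁻¹ :=
      fun n => Finset.sum_range_sub (fun i => ((Z i) ^ 2)⁻¹) n
    have h1 : Tendsto (fun n : ℕ => (n : ℝ)⁻¹ * (((Z n) ^ 2)⁻¹ - ((Z 0) ^ 2)⁻¹)) atTop (𝓝 L) := by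
      apply hces.congr
      intro n
      rw [hsum n]
    have h2 : Tendsto (fun n : ℕ => (n : ℝ)⁻¹ * ((Z 0) ^ 2)⁻¹) atTop (𝓝 (0 * ((Z 0) ^ 2)⁻¹)) :=
      tendsto_inv_atTop_nhds_zero_nat.mul_const _
    rw [zero_mul] at h2
    have h3 := h1.add h2
    rw [add_zero] at h3
    apply h3.congr
    intro n
    ring
  have part2 : Tendsto (fun k : ℕ => 1 / ((k : ℝ) * Z k ^ 2)) atTop (𝓝 (4 / (5 * Xinf ^ 2))) := by
    rw [← hLdef]
    apply hw.congr
    intro k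
    rw [one_div, mul_inv]
  -- k Z_k² → 5X∞²/4
  have hLpos : 0 < L := by rw [hLdef]; positivity
  have hM : Tendsto (fun k : ℕ => (k : ℝ) * Z k ^ 2) atTop (𝓝 (5 * Xinf ^ 2 / 4)) := by
    have h1 := part2.inv₀ (ne_of_gt hLpos)
    have hLinv : L⁻¹ = 5 * Xinf ^ 2 / 4 := by
      rw [hLdef]
      field_simp
    rw [hLinv] at h1
    apply h1.congr'
    filter_upwards [eventually_ge_atTop 1] with k hk
    have hkpos : (0 : ℝ) < (k : ℝ) := by exact_mod_cast hk
    have hzk := hZpos k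
    rw [one_div, inv_inv]
  -- k² δ_k → 25X∞/16
  have hδlim : Tendsto (fun k : ℕ => (k : ℝ) ^ 2 * (X (k + 1) - X k)) atTop
      (𝓝 (25 * Xinf / 16)) := by
    have hfac : Tendsto (fun k : ℕ => ((k : ℝ) * Z k ^ 2) ^ 2
        * (4 / (PXZ (X k) (Z k) * (PXZ (X k) (Z k) + X k) ^ 2))) atTop
        (𝓝 ((5 * Xinf ^ 2 / 4) ^ 2 * (4 / (Xinf * (Xinf + Xinf) ^ 2)))) :=
      (hM.pow 2).mul (tendsto_const_nhds.div
        (hPlim.mul ((hPlim.add hXlim).pow 2)) (by positivity))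
    have hceq : (5 * Xinf ^ 2 / 4) ^ 2 * (4 / (Xinf * (Xinf + Xinf) ^ 2)) = 25 * Xinf / 16 := by
      field_simp
      ring
    rw [hceq] at hfac
    apply hfac.congr
    intro k
    have hδ := alg2 (X k) (Z k) (PXZ (X k) (Z k)) (hXpos k) (hPpos k) (hPsq k)
    rw [← hrecX k] at hδ
    rw [hδ]
    ring
  -- part 3 via the tail lemma
  have hS : ∀ k, Tendsto (fun n => ∑ j ∈ Finset.Ico k n, (X (j + 1) - X j)) atTop
      (𝓝 (Xinf - X k)) := by
    intro k
    apply (hXlim.sub_const (X k)).congr'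
    filter_upwards [eventually_ge_atTop k] with n hn
    have := sum_telescope_Ico' (fun j => - X j) hn
    simp only [neg_sub_neg] at this
    exact this.symm
  have part3 : Tendsto (fun k : ℕ => (k : ℝ) * (Xinf - X k)) atTop (𝓝 (25 * Xinf / 16)) :=
    tail_lemma (fun k => X (k + 1) - X k) (fun k => Xinf - X k) (25 * Xinf / 16)
      (fun k => sub_nonneg.mpr (hmono k)) hδlim hS
  refine ⟨hXinf, part2, part3, ?_, ?_⟩
  -- Θ bound for Z
  · have hMpos : (0 : ℝ) < 5 * Xinf ^ 2 / 4 := by positivity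
    set M : ℝ := 5 * Xinf ^ 2 / 4 with hMdef
    obtain ⟨N, hN⟩ := Metric.tendsto_atTop.mp hM (M / 2) (by positivity)
    refine ⟨Real.sqrt (M / 2), Real.sqrt (3 * M / 2), Real.sqrt_pos.mpr (by positivity),
      Real.sqrt_pos.mpr (by positivity), max N 1, fun k hk => ?_⟩
    have hk1 : 1 ≤ k := le_trans (le_max_right _ _) hk
    have hkN : N ≤ k := le_trans (le_max_left _ _) hk
    have hkpos : (0 : ℝ) < (k : ℝ) := by exact_mod_cast hk1
    have hd := hN k hkN
    rw [Real.dist_eq, abs_sub_lt_iff] at hd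
    have hup : (k : ℝ) * Z k ^ 2 ≤ 3 * M / 2 := by linarith [hd.1]
    have hlo : M / 2 ≤ (k : ℝ) * Z k ^ 2 := by linarith [hd.2]
    have hZk := hZpos k
    have hzsq : Z k = Real.sqrt (Z k ^ 2) := (Real.sqrt_sq hZk.le).symm
    constructor
    · rw [hzsq, ← Real.sqrt_inv, ← Real.sqrt_mul (by positivity)]
      apply Real.sqrt_le_sqrt
      rw [mul_comm, ← div_eq_inv_mul, div_le_iff₀ hkpos]
      linarith
    · rw [hzsq, ← Real.sqrt_inv, ← Real.sqrt_mul (by positivity)]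
      apply Real.sqrt_le_sqrt
      rw [mul_comm, ← div_eq_inv_mul, le_div_iff₀ hkpos]
      linarith
  -- Θ bound for X∞ − X
  · have hcpos : (0 : ℝ) < 25 * Xinf / 16 := by positivity
    set c : ℝ := 25 * Xinf / 16 with hcdef
    obtain ⟨N, hN⟩ := Metric.tendsto_atTop.mp part3 (c / 2) (by positivity)
    refine ⟨c / 2, 3 * c / 2, by positivity, by positivity, max N 1, fun k hk => ?_⟩
    have hk1 : 1 ≤ k := le_trans (le_max_right _ _) hk
    have hkN : N ≤ k := le_trans (le_max_left _ _) hk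
    have hkpos : (0 : ℝ) < (k : ℝ) := by exact_mod_cast hk1
    have hd := hN k hkN
    rw [Real.dist_eq, abs_sub_lt_iff] at hd
    have hup : (k : ℝ) * (Xinf - X k) ≤ 3 * c / 2 := by linarith [hd.1]
    have hlo : c / 2 ≤ (k : ℝ) * (Xinf - X k) := by linarith [hd.2]
    constructor
    · rw [← div_eq_mul_inv, div_le_iff₀ hkpos]
      nlinarith
    · rw [← div_eq_mul_inv, le_div_iff₀ hkpos]
      nlinarith
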